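/- For the TRW coframe and connection, the torsion scalar T := (1/2) T^a_{μν} S_a^{μν} satisfies, at every point (t,r,θ,φ) of U, T = 6(ȧ/a)² + 12 W₁ (ȧ/a) + 6 W₁² − 6 W₂², where ȧ = a'(t); equivalently T = 6(ȧ/a + W₁ + W₂)(ȧ/a + W₁ − W₂). -/

import Mathlib

/-!
STATEMENT 7: For the TRW coframe h^a_μ = diag(1, a/χ, a r, a r sinθ) and TRW
connection, the torsion scalar T = (1/2) T^a_{μν} S_a^{μν} satisfies, at every
point of U = {(t,r,θ,φ) : r > 0, 0 < θ < π, 1 − k r² > 0},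
T = 6(ȧ/a)² + 12 W₁ (ȧ/a) + 6 W₁² − 6 W₂²,
equivalently T = 6(ȧ/a + W₁ + W₂)(ȧ/a + W₁ − W₂).
Coordinates: x : Fin 4 → ℝ with t = x 0, r = x 1, θ = x 2, φ = x 3.
-/

open Real
open scoped ContDiff

noncomputable section

/-- Partial derivative in the μ-th coordinate direction. -/
def pd (μ : Fin 4) (f : (Fin 4 → ℝ) → ℝ) (x : Fin 4 → ℝ) : ℝ :=
  fderiv ℝ f x (Pi.single μ 1)

/-- The Minkowski metric η = diag(−1,1,1,1) on frame indices. -/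
def eta : Matrix (Fin 4) (Fin 4) ℝ := Matrix.diagonal ![-1, 1, 1, 1]

/-- The TRW coframe h^a_μ = diag(1, a/χ, a r, a r sinθ), χ = √(1 − k r²);
rows are frame indices a, columns are coordinate indices μ. -/
def hco (k : ℝ) (a : ℝ → ℝ) (x : Fin 4 → ℝ) : Matrix (Fin 4) (Fin 4) ℝ :=
  Matrix.diagonal
    ![1, a (x 0) / Real.sqrt (1 - k * (x 1) ^ 2),
      a (x 0) * (x 1), a (x 0) * (x 1) * Real.sin (x 2)]

/-- The inverse frame h_a^μ = diag(1, χ/a, 1/(a r), 1/(a r sinθ));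
rows are frame indices a, columns are coordinate indices μ. -/
def hin (k : ℝ) (a : ℝ → ℝ) (x : Fin 4 → ℝ) : Matrix (Fin 4) (Fin 4) ℝ :=
  Matrix.diagonal
    ![1, Real.sqrt (1 - k * (x 1) ^ 2) / a (x 0),
      1 / (a (x 0) * (x 1)), 1 / (a (x 0) * (x 1) * Real.sin (x 2))]

/-- The matrices ω_μ = (ω^a_{bμ}) of the TRW connection, obtained from the
antisymmetric one-forms ω_{12} = W₁(a/χ) dr, ω_{13} = W₁ a r dθ,
ω_{14} = W₁ a r sinθ dφ, ω_{23} = −χ dθ + W₂ a r sinθ dφ,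
ω_{24} = −W₂ a r dθ − χ sinθ dφ, ω_{34} = W₂(a/χ) dr − cosθ dφ,
via ω^a_{bμ} = η^{ac} ω_{cbμ}. -/
def omegaTRW (k : ℝ) (a W₁ W₂ : ℝ → ℝ) (μ : Fin 4) (x : Fin 4 → ℝ) :
    Matrix (Fin 4) (Fin 4) ℝ :=
  let t := x 0
  let r := x 1
  let θ := x 2
  let χ := Real.sqrt (1 - k * r ^ 2)
  ![(0 : Matrix (Fin 4) (Fin 4) ℝ),
    !![0, -(W₁ t * a t / χ), 0, 0;
       -(W₁ t * a t / χ), 0, 0, 0;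
       0, 0, 0, W₂ t * a t / χ;
       0, 0, -(W₂ t * a t / χ), 0],
    !![0, 0, -(W₁ t * a t * r), 0;
       0, 0, -χ, -(W₂ t * a t * r);
       -(W₁ t * a t * r), χ, 0, 0;
       0, W₂ t * a t * r, 0, 0],
    !![0, 0, 0, -(W₁ t * a t * r * Real.sin θ);
       0, 0, W₂ t * a t * r * Real.sin θ, -(χ * Real.sin θ);
       0, -(W₂ t * a t * r * Real.sin θ), 0, -Real.cos θ;
       -(W₁ t * a t * r * Real.sin θ), χ * Real.sin θ, Real.cos θ, 0]] μ

/-- Torsion tensor T^a_{μν} = ∂_μ h^a_ν − ∂_ν h^a_μ + ω^a_{bμ} h^b_ν − ω^a_{bν} h^b_μ. -/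
def Tor (k : ℝ) (a W₁ W₂ : ℝ → ℝ) (x : Fin 4 → ℝ) (A μ ν : Fin 4) : ℝ :=
  pd μ (fun y => hco k a y A ν) x - pd ν (fun y => hco k a y A μ) x
    + ∑ b, (omegaTRW k a W₁ W₂ μ x A b * hco k a x b ν
        - omegaTRW k a W₁ W₂ ν x A b * hco k a x b μ)

/-- Inverse metric g^{μν} = η^{ab} h_a^μ h_b^ν. -/
def ginv (k : ℝ) (a : ℝ → ℝ) (x : Fin 4 → ℝ) (μ ν : Fin 4) : ℝ :=
  ∑ b, ∑ c, eta b c * hin k a x b μ * hin k a x c ν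

/-- Spacetime-indexed torsion T^ρ_{μν} = h_a^ρ T^a_{μν}. -/
def Tst (k : ℝ) (a W₁ W₂ : ℝ → ℝ) (x : Fin 4 → ℝ) (ρ μ ν : Fin 4) : ℝ :=
  ∑ A, hin k a x A ρ * Tor k a W₁ W₂ x A μ ν

/-- The torsion vector trace T^{φμ}_{ φ} (index raised with g). -/
def Vtr (k : ℝ) (a W₁ W₂ : ℝ → ℝ) (x : Fin 4 → ℝ) (μ : Fin 4) : ℝ :=
  ∑ σ, ∑ α, ginv k a x μ α * Tst k a W₁ W₂ x σ α σ

/-- T_a^{μν} = η_{ab} g^{μα} g^{νβ} T^b_{αβ}. -/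
def Tlow (k : ℝ) (a W₁ W₂ : ℝ → ℝ) (x : Fin 4 → ℝ) (A μ ν : Fin 4) : ℝ :=
  ∑ B, ∑ α, ∑ β,
    eta A B * ginv k a x μ α * ginv k a x ν β * Tor k a W₁ W₂ x B α β

/-- T^{νμ}_{ a} = h_a^β g^{μα} T^ν_{αβ}. -/
def Tnm (k : ℝ) (a W₁ W₂ : ℝ → ℝ) (x : Fin 4 → ℝ) (A μ ν : Fin 4) : ℝ :=
  ∑ α, ∑ β, hin k a x A β * ginv k a x μ α * Tst k a W₁ W₂ x ν α β

/-- T^{μν}_{ a} = h_a^β g^{να} T^μ_{αβ}. -/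
def Tmn (k : ℝ) (a W₁ W₂ : ℝ → ℝ) (x : Fin 4 → ℝ) (A μ ν : Fin 4) : ℝ :=
  ∑ α, ∑ β, hin k a x A β * ginv k a x ν α * Tst k a W₁ W₂ x μ α β

/-- Superpotential
S_a^{μν} = (1/2)(T_a^{μν} + T^{νμ}_a − T^{μν}_a) − h_a^ν T^{φμ}_φ + h_a^μ T^{φν}_φ. -/
def Spot (k : ℝ) (a W₁ W₂ : ℝ → ℝ) (x : Fin 4 → ℝ) (A μ ν : Fin 4) : ℝ :=
  (1 / 2) * (Tlow k a W₁ W₂ x A μ ν + Tnm k a W₁ W₂ x A μ ν - Tmn k a W₁ W₂ x A μ ν)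
    - hin k a x A ν * Vtr k a W₁ W₂ x μ + hin k a x A μ * Vtr k a W₁ W₂ x ν

/-- The torsion scalar T = (1/2) T^a_{μν} S_a^{μν}. -/
def Tscal (k : ℝ) (a W₁ W₂ : ℝ → ℝ) (x : Fin 4 → ℝ) : ℝ :=
  (1 / 2) * ∑ A, ∑ μ, ∑ ν, Tor k a W₁ W₂ x A μ ν * Spot k a W₁ W₂ x A μ ν

set_option maxHeartbeats 4000000

/-- Explicit torsion components. -/
def TorM (D Aa w1 w2 r χ s : ℝ) : Fin 4 → Fin 4 → Fin 4 → ℝ :=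
  ![![![0,0,0,0],![0,0,0,0],![0,0,0,0],![0,0,0,0]],
    ![![0, (D + w1 * Aa) / χ, 0, 0],
      ![-((D + w1 * Aa) / χ), 0, 0, 0],
      ![0, 0, 0, -(2 * w2 * Aa ^ 2 * r ^ 2 * s)],
      ![0, 0, 2 * w2 * Aa ^ 2 * r ^ 2 * s, 0]],
    ![![0, 0, (D + w1 * Aa) * r, 0],
      ![0, 0, 0, 2 * w2 * Aa ^ 2 * r * s / χ],
      ![-((D + w1 * Aa) * r), 0, 0, 0],
      ![0, -(2 * w2 * Aa ^ 2 * r * s / χ), 0, 0]],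
    ![![0, 0, 0, (D + w1 * Aa) * r * s],
      ![0, 0, -(2 * w2 * Aa ^ 2 * r / χ), 0],
      ![0, 2 * w2 * Aa ^ 2 * r / χ, 0, 0],
      ![-((D + w1 * Aa) * r * s), 0, 0, 0]]]


/-- Explicit superpotential components. -/
def SpotM (D Aa w1 w2 r χ s : ℝ) : Fin 4 → Fin 4 → Fin 4 → ℝ :=
  ![![![0,0,0,0],![0,0,0,0],![0,0,0,0],![0,0,0,0]],
    ![![0, 2 * ((D + w1 * Aa) / Aa) * χ / Aa, 0, 0],
      ![-(2 * ((D + w1 * Aa) / Aa) * χ / Aa), 0, 0, 0],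
      ![0, 0, 0, w2 / (Aa ^ 2 * r ^ 2 * s)],
      ![0, 0, -(w2 / (Aa ^ 2 * r ^ 2 * s)), 0]],
    ![![0, 0, 2 * ((D + w1 * Aa) / Aa) / (Aa * r), 0],
      ![0, 0, 0, -(w2 * χ / (Aa ^ 2 * r * s))],
      ![-(2 * ((D + w1 * Aa) / Aa) / (Aa * r)), 0, 0, 0],
      ![0, w2 * χ / (Aa ^ 2 * r * s), 0, 0]],
    ![![0, 0, 0, 2 * ((D + w1 * Aa) / Aa) / (Aa * r * s)],
      ![0, 0, w2 * χ / (Aa ^ 2 * r), 0],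
      ![0, -(w2 * χ / (Aa ^ 2 * r)), 0, 0],
      ![-(2 * ((D + w1 * Aa) / Aa) / (Aa * r * s)), 0, 0, 0]]]

lemma pd_of {f : (Fin 4 → ℝ) → ℝ} {L : (Fin 4 → ℝ) →L[ℝ] ℝ} {x : Fin 4 → ℝ}
    (h : HasFDerivAt f L x) (μ : Fin 4) : pd μ f x = L (Pi.single μ 1) := by
  rw [pd, h.fderiv]

set_option maxHeartbeats 4000000 in
lemma Tor_components (k : ℝ) (a W₁ W₂ : ℝ → ℝ)
    (ha : ContDiff ℝ ∞ a) (x : Fin 4 → ℝ) (hk : 0 < 1 - k * (x 1) ^ 2) :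
    ∀ A μ ν, Tor k a W₁ W₂ x A μ ν
      = TorM (deriv a (x 0)) (a (x 0)) (W₁ (x 0)) (W₂ (x 0)) (x 1)
          (Real.sqrt (1 - k * (x 1) ^ 2)) (Real.sin (x 2)) A μ ν := by
  have hχ : 0 < Real.sqrt (1 - k * x 1 ^ 2) := Real.sqrt_pos.2 hk
  have hs2 : Real.sqrt (1 - k * x 1 ^ 2) ^ 2 = 1 - k * x 1 ^ 2 := Real.sq_sqrt hk.le
  have hA : HasFDerivAt (fun y : Fin 4 → ℝ => a (y 0))
      (deriv a (x 0) • (ContinuousLinearMap.proj 0 : (Fin 4 → ℝ) →L[ℝ] ℝ)) x := by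
    simpa [Function.comp_def] using
      HasDerivAt.comp_hasFDerivAt (f := fun y : Fin 4 → ℝ => y 0) x ((ha.differentiable (by simp) (x 0)).hasDerivAt)
        (hasFDerivAt_apply 0 x)
  have hpoly : HasDerivAt (fun r : ℝ => 1 - k * r ^ 2) (-(k * (2 * x 1))) (x 1) := by
    have := ((hasDerivAt_pow 2 (x 1)).const_mul k).const_sub 1
    refine this.congr_deriv ?_
    ring
  have hR : HasDerivAt (fun r : ℝ => Real.sqrt (1 - k * r ^ 2))
      (-(k * (2 * x 1)) / (2 * Real.sqrt (1 - k * x 1 ^ 2))) (x 1) :=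
    hpoly.sqrt (ne_of_gt hk)
  have hG : HasDerivAt (fun r : ℝ => (Real.sqrt (1 - k * r ^ 2))⁻¹)
      (-(-(k * (2 * x 1)) / (2 * Real.sqrt (1 - k * x 1 ^ 2))) / Real.sqrt (1 - k * x 1 ^ 2) ^ 2)
      (x 1) := hR.inv (ne_of_gt hχ)
  have hGF : HasFDerivAt (fun y : Fin 4 → ℝ => (Real.sqrt (1 - k * y 1 ^ 2))⁻¹)
      ((-(-(k * (2 * x 1)) / (2 * Real.sqrt (1 - k * x 1 ^ 2))) / Real.sqrt (1 - k * x 1 ^ 2) ^ 2)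
        • (ContinuousLinearMap.proj 1 : (Fin 4 → ℝ) →L[ℝ] ℝ)) x := by
    simpa [Function.comp_def] using
      HasDerivAt.comp_hasFDerivAt (f := fun y : Fin 4 → ℝ => y 1) x hG (hasFDerivAt_apply 1 x)
  have hdiv : HasFDerivAt (fun y : Fin 4 → ℝ => a (y 0) / Real.sqrt (1 - k * y 1 ^ 2))
      (a (x 0) • ((-(-(k * (2 * x 1)) / (2 * Real.sqrt (1 - k * x 1 ^ 2))) / Real.sqrt (1 - k * x 1 ^ 2) ^ 2)
        • (ContinuousLinearMap.proj 1 : (Fin 4 → ℝ) →L[ℝ] ℝ))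
       + (Real.sqrt (1 - k * x 1 ^ 2))⁻¹ • (deriv a (x 0) • (ContinuousLinearMap.proj 0 : (Fin 4 → ℝ) →L[ℝ] ℝ))) x := by
    rw [show (fun y : Fin 4 → ℝ => a (y 0) / Real.sqrt (1 - k * y 1 ^ 2))
        = fun y : Fin 4 → ℝ => a (y 0) * (Real.sqrt (1 - k * y 1 ^ 2))⁻¹ from
      funext fun y => div_eq_mul_inv _ _]
    exact hA.mul hGF
  have hY : HasFDerivAt (fun y : Fin 4 → ℝ => y 1)
      (ContinuousLinearMap.proj 1 : (Fin 4 → ℝ) →L[ℝ] ℝ) x := hasFDerivAt_apply 1 x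
  have h2 : HasFDerivAt (fun y : Fin 4 → ℝ => a (y 0) * y 1)
      (a (x 0) • (ContinuousLinearMap.proj 1 : (Fin 4 → ℝ) →L[ℝ] ℝ)
        + x 1 • (deriv a (x 0) • (ContinuousLinearMap.proj 0 : (Fin 4 → ℝ) →L[ℝ] ℝ))) x :=
    hA.mul hY
  have hS : HasFDerivAt (fun y : Fin 4 → ℝ => Real.sin (y 2))
      (Real.cos (x 2) • (ContinuousLinearMap.proj 2 : (Fin 4 → ℝ) →L[ℝ] ℝ)) x := by
    simpa [Function.comp_def] using
      HasDerivAt.comp_hasFDerivAt (f := fun y : Fin 4 → ℝ => y 2) x (Real.hasDerivAt_sin (x 2)) (hasFDerivAt_apply 2 x)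
  have h3 : HasFDerivAt (fun y : Fin 4 → ℝ => a (y 0) * y 1 * Real.sin (y 2))
      ((a (x 0) * x 1) • (Real.cos (x 2) • (ContinuousLinearMap.proj 2 : (Fin 4 → ℝ) →L[ℝ] ℝ))
        + Real.sin (x 2) • (a (x 0) • (ContinuousLinearMap.proj 1 : (Fin 4 → ℝ) →L[ℝ] ℝ)
        + x 1 • (deriv a (x 0) • (ContinuousLinearMap.proj 0 : (Fin 4 → ℝ) →L[ℝ] ℝ)))) x :=
    h2.mul hS
  have pdc : ∀ (c : ℝ) (μ : Fin 4), pd μ (fun _ : Fin 4 → ℝ => c) x = 0 := by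
    intro c μ; simp [pd]
  have pd1v : ∀ μ, pd μ (fun y : Fin 4 → ℝ => a (y 0) / Real.sqrt (1 - k * y 1 ^ 2)) x
      = ![deriv a (x 0) / Real.sqrt (1 - k * x 1 ^ 2),
          a (x 0) * (k * x 1) / Real.sqrt (1 - k * x 1 ^ 2) ^ 3, 0, 0] μ := by
    intro μ
    rw [pd_of hdiv]
    fin_cases μ <;> simp [Pi.single_apply] <;> field_simp <;>
      linear_combination (2 * a (x 0) * k * x 1 * Real.sqrt (1 - k * x 1 ^ 2)) * hs2
  have pd2v : ∀ μ, pd μ (fun y : Fin 4 → ℝ => a (y 0) * y 1) x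
      = ![deriv a (x 0) * x 1, a (x 0), 0, 0] μ := by
    intro μ
    rw [pd_of h2]
    fin_cases μ <;> simp [Pi.single_apply] <;> ring
  have pd3v : ∀ μ, pd μ (fun y : Fin 4 → ℝ => a (y 0) * y 1 * Real.sin (y 2)) x
      = ![deriv a (x 0) * x 1 * Real.sin (x 2), a (x 0) * Real.sin (x 2),
          a (x 0) * x 1 * Real.cos (x 2), 0] μ := by
    intro μ
    rw [pd_of h3]
    fin_cases μ <;> simp [Pi.single_apply] <;> ring
  intro A μ ν
  fin_cases A <;> fin_cases μ <;> fin_cases ν <;>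
    simp [Tor, TorM, hco, omegaTRW, Matrix.diagonal_apply, Fin.sum_univ_four,
      Matrix.vecHead, Matrix.vecTail, pdc, pd1v, pd2v, pd3v]
  all_goals
    generalize hg : Real.sqrt (1 - k * x 1 ^ 2) = c at hχ ⊢
  all_goals
    try field_simp [ne_of_gt hχ]
  all_goals ring

/-- The torsion scalar of the TRW geometry:
T = 6(ȧ/a)² + 12 W₁ (ȧ/a) + 6W₁² − 6W₂² = 6(ȧ/a + W₁ + W₂)(ȧ/a + W₁ − W₂). -/
theorem TRW_torsion_scalar (k : ℝ) (a W₁ W₂ : ℝ → ℝ)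
    (ha : ContDiff ℝ ∞ a) (hapos : ∀ t, 0 < a t)
    (hW₁ : ContDiff ℝ ∞ W₁) (hW₂ : ContDiff ℝ ∞ W₂)
    (x : Fin 4 → ℝ) (hr : 0 < x 1) (hθ₁ : 0 < x 2) (hθ₂ : x 2 < Real.pi)
    (hk : 0 < 1 - k * (x 1) ^ 2) :
    Tscal k a W₁ W₂ x
        = 6 * (deriv a (x 0) / a (x 0)) ^ 2
          + 12 * W₁ (x 0) * (deriv a (x 0) / a (x 0))
          + 6 * (W₁ (x 0)) ^ 2 - 6 * (W₂ (x 0)) ^ 2 ∧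
    Tscal k a W₁ W₂ x
        = 6 * (deriv a (x 0) / a (x 0) + W₁ (x 0) + W₂ (x 0))
          * (deriv a (x 0) / a (x 0) + W₁ (x 0) - W₂ (x 0)) := by

  have hχ : 0 < Real.sqrt (1 - k * x 1 ^ 2) := Real.sqrt_pos.2 hk
  have hs : 0 < Real.sin (x 2) := Real.sin_pos_of_pos_of_lt_pi hθ₁ hθ₂
  have ha0 : a (x 0) ≠ 0 := ne_of_gt (hapos (x 0))
  have htor := Tor_components k a W₁ W₂ ha x hk
  have hs0 : Real.sin (x 2) ≠ 0 := ne_of_gt hs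
  have hr0 : x 1 ≠ 0 := ne_of_gt hr
  have hginv : ∀ μ ν, ginv k a x μ ν
      = Matrix.diagonal ![(-1 : ℝ), (Real.sqrt (1 - k * x 1 ^ 2) / a (x 0)) ^ 2,
          (1 / (a (x 0) * x 1)) ^ 2, (1 / (a (x 0) * x 1 * Real.sin (x 2))) ^ 2] μ ν := by
    intro μ ν
    fin_cases μ <;> fin_cases ν <;>
      simp [ginv, eta, hin, Fin.sum_univ_four, Matrix.diagonal_apply] <;> ring
  have hTst : ∀ ρ μ ν, Tst k a W₁ W₂ x ρ μ ν
      = ![![![0,0,0,0],![0,0,0,0],![0,0,0,0],![0,0,0,0]],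
          ![![0, (deriv a (x 0) + W₁ (x 0) * a (x 0)) / a (x 0), 0, 0],
            ![-((deriv a (x 0) + W₁ (x 0) * a (x 0)) / a (x 0)), 0, 0, 0],
            ![0, 0, 0, -(2 * W₂ (x 0) * a (x 0) * x 1 ^ 2 * Real.sin (x 2) * Real.sqrt (1 - k * x 1 ^ 2))],
            ![0, 0, 2 * W₂ (x 0) * a (x 0) * x 1 ^ 2 * Real.sin (x 2) * Real.sqrt (1 - k * x 1 ^ 2), 0]],
          ![![0, 0, (deriv a (x 0) + W₁ (x 0) * a (x 0)) / a (x 0), 0],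
            ![0, 0, 0, 2 * W₂ (x 0) * a (x 0) * Real.sin (x 2) / Real.sqrt (1 - k * x 1 ^ 2)],
            ![-((deriv a (x 0) + W₁ (x 0) * a (x 0)) / a (x 0)), 0, 0, 0],
            ![0, -(2 * W₂ (x 0) * a (x 0) * Real.sin (x 2) / Real.sqrt (1 - k * x 1 ^ 2)), 0, 0]],
          ![![0, 0, 0, (deriv a (x 0) + W₁ (x 0) * a (x 0)) / a (x 0)],
            ![0, 0, -(2 * W₂ (x 0) * a (x 0) / (Real.sin (x 2) * Real.sqrt (1 - k * x 1 ^ 2))), 0],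
            ![0, 2 * W₂ (x 0) * a (x 0) / (Real.sin (x 2) * Real.sqrt (1 - k * x 1 ^ 2)), 0, 0],
            ![-((deriv a (x 0) + W₁ (x 0) * a (x 0)) / a (x 0)), 0, 0, 0]]] ρ μ ν := by
    intro ρ μ ν
    fin_cases ρ <;> fin_cases μ <;> fin_cases ν <;>
      simp [Tst, hin, htor, TorM, Fin.sum_univ_four, Matrix.diagonal_apply,
        Matrix.vecHead, Matrix.vecTail]
    all_goals
      generalize hg : Real.sqrt (1 - k * x 1 ^ 2) = c at hχ ⊢
    all_goals
      try field_simp [ne_of_gt hχ]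
    all_goals ring
  have hVtr : ∀ μ, Vtr k a W₁ W₂ x μ
      = ![-(3 * ((deriv a (x 0) + W₁ (x 0) * a (x 0)) / a (x 0))), 0, 0, 0] μ := by
    intro μ
    fin_cases μ <;>
      simp [Vtr, Fin.sum_univ_four, hginv, hTst, Matrix.diagonal_apply,
        Matrix.vecHead, Matrix.vecTail]
    all_goals ring
  have hSpot : ∀ A μ ν, Spot k a W₁ W₂ x A μ ν
      = SpotM (deriv a (x 0)) (a (x 0)) (W₁ (x 0)) (W₂ (x 0)) (x 1)
          (Real.sqrt (1 - k * (x 1) ^ 2)) (Real.sin (x 2)) A μ ν := by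
    intro A μ ν
    fin_cases A <;> fin_cases μ <;> fin_cases ν <;>
      simp [Spot, SpotM, Tlow, Tnm, Tmn, hginv, hTst, hVtr, htor, TorM, eta, hin,
        Fin.sum_univ_four, Matrix.diagonal_apply, Matrix.vecHead, Matrix.vecTail]
    all_goals
      generalize hg : Real.sqrt (1 - k * x 1 ^ 2) = c at hχ ⊢
    all_goals
      try field_simp [ne_of_gt hχ]
    all_goals ring
  have key : Tscal k a W₁ W₂ x
      = 6 * (deriv a (x 0) / a (x 0)) ^ 2
        + 12 * W₁ (x 0) * (deriv a (x 0) / a (x 0))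
        + 6 * (W₁ (x 0)) ^ 2 - 6 * (W₂ (x 0)) ^ 2 := by
    simp [Tscal, Fin.sum_univ_four, htor, hSpot, TorM, SpotM,
      Matrix.vecHead, Matrix.vecTail]
    generalize hg : Real.sqrt (1 - k * x 1 ^ 2) = c at hχ ⊢
    field_simp
    ring
  exact ⟨key, by rw [key]; ring⟩


end
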